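/- Every chordal graph is codismantlable. -/

import Mathlib

open SimpleGraph

variable {V : Type*}

/-- The closed neighborhood `N_G[x]` of a vertex. -/
def closedNbhd (G : SimpleGraph V) (x : V) : Set V := insert x (G.neighborSet x)

/-- `x` is codominated: some `y ≠ x` has `N_G[y] ⊆ N_G[x]`. -/
def Codominated (G : SimpleGraph V) (x : V) : Prop :=
  ∃ y, y ≠ x ∧ closedNbhd G y ⊆ closedNbhd G x

/-- `S` is an independent set of `G`. -/
def IsIndep (G : SimpleGraph V) (S : Set V) : Prop :=
  ∀ ⦃u⦄, u ∈ S → ∀ ⦃v⦄, v ∈ S → ¬ G.Adj u v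

/-- `x` is a shedding vertex of `G`: every independent set of `G - N_G[x]`
extends by a neighbor of `x`. -/
def SheddingVertex (G : SimpleGraph V) (x : V) : Prop :=
  ∀ S : Set V, S ⊆ (closedNbhd G x)ᶜ → IsIndep G S →
    ∃ v ∈ G.neighborSet x, IsIndep G (insert v S)

/-- The closed neighborhood `N_G[I]` of a set of vertices. -/
def closedNbhdSet (G : SimpleGraph V) (I : Set V) : Set V :=
  I ∪ {v | ∃ u ∈ I, G.Adj u v}

/-- `x` is codominated in the subgraph of `G` induced on `A`. -/
def CodominatedOn (G : SimpleGraph V) (A : Finset V) (x : V) : Prop :=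
  ∃ y ∈ A, y ≠ x ∧ ∀ z ∈ A, (z = y ∨ G.Adj y z) → (z = x ∨ G.Adj x z)

/-- The subgraph of `G` induced on `A` is codismantlable. -/
def CodismantlableOn (G : SimpleGraph V) [DecidableEq V] (A : Finset V) : Prop :=
  (∀ x ∈ A, ∀ y ∈ A, ¬ G.Adj x y) ∨
    ∃ x, ∃ h : x ∈ A, CodominatedOn G A x ∧ CodismantlableOn G (A.erase x)
termination_by A.card
decreasing_by exact Finset.card_erase_lt_of_mem h

/-- `G` is codismantlable. -/
def Codismantlable (G : SimpleGraph V) [Fintype V] [DecidableEq V] : Prop :=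
  CodismantlableOn G Finset.univ

/-- A maximal independent set of `G`. -/
def MaxIndep (G : SimpleGraph V) (S : Set V) : Prop :=
  IsIndep G S ∧ ∀ T : Set V, IsIndep G T → S ⊆ T → S = T

/-- `G` is well-covered: all maximal independent sets have the same size. -/
def WellCovered (G : SimpleGraph V) : Prop :=
  ∀ S T : Set V, MaxIndep G S → MaxIndep G T → S.ncard = T.ncard

/-- `G` has no induced cycle of length `n`. -/
def CycleFree (G : SimpleGraph V) (n : ℕ) : Prop :=
  IsEmpty (cycleGraph n ↪g G)

/-- `G` is chordal: no induced cycle of length at least 4. -/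
def Chordal (G : SimpleGraph V) : Prop :=
  ∀ n, 4 ≤ n → CycleFree G n

/-- `M` is a matching of `G` (as a set of edges). -/
def IsMatchingSet (G : SimpleGraph V) (M : Finset (Sym2 V)) : Prop :=
  (∀ e ∈ M, e ∈ G.edgeSet) ∧
    ∀ e ∈ M, ∀ f ∈ M, e ≠ f → ∀ v : V, v ∈ e → v ∉ f

/-- `M` is an induced matching of `G`. -/
def IsInducedMatching (G : SimpleGraph V) (M : Finset (Sym2 V)) : Prop :=
  IsMatchingSet G M ∧
    ∀ e ∈ M, ∀ f ∈ M, e ≠ f → ∀ u : V, u ∈ e → ∀ v : V, v ∈ f → ¬ G.Adj u v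

/-- The matching number `m(G)`. -/
noncomputable def matchNum (G : SimpleGraph V) : ℕ :=
  sSup {n | ∃ M : Finset (Sym2 V), IsMatchingSet G M ∧ M.card = n}

/-- The induced matching number `im(G)`. -/
noncomputable def indMatchNum (G : SimpleGraph V) : ℕ :=
  sSup {n | ∃ M : Finset (Sym2 V), IsInducedMatching G M ∧ M.card = n}

open Classical in
/-- The vertices of `A` outside the closed neighborhood of `x`. -/
noncomputable def delNbhd (G : SimpleGraph V) [DecidableEq V] (A : Finset V) (x : V) : Finset V :=
  A.filter (fun z => ¬(z = x ∨ G.Adj x z))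

/-- `x` is a shedding vertex of the subgraph of `G` induced on `A`. -/
def SheddingOn (G : SimpleGraph V) (A : Finset V) (x : V) : Prop :=
  ∀ S : Set V, S ⊆ ↑A → (∀ u ∈ S, ¬(u = x ∨ G.Adj x u)) → IsIndep G S →
    ∃ v ∈ A, G.Adj x v ∧ IsIndep G (insert v S)

lemma delNbhd_ssubset (G : SimpleGraph V) [DecidableEq V] {A : Finset V} {x : V}
    (h : x ∈ A) : delNbhd G A x ⊂ A := by
  classical
  refine (Finset.ssubset_iff_of_subset (Finset.filter_subset _ _)).mpr ⟨x, h, ?_⟩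
  simp [delNbhd]

/-- The subgraph of `G` induced on `A` is vertex decomposable. -/
noncomputable def VertexDecomposableOn (G : SimpleGraph V) [DecidableEq V] (A : Finset V) :
    Prop :=
  (∀ x ∈ A, ∀ y ∈ A, ¬ G.Adj x y) ∨
    ∃ x, ∃ h : x ∈ A, SheddingOn G A x ∧ VertexDecomposableOn G (A.erase x) ∧
      VertexDecomposableOn G (delNbhd G A x)
termination_by A.card
decreasing_by
  · exact Finset.card_erase_lt_of_mem h
  · exact Finset.card_lt_card (delNbhd_ssubset G h)

/-- `G` is vertex decomposable. -/
noncomputable def VertexDecomposable (G : SimpleGraph V) [Fintype V] [DecidableEq V] : Prop :=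
  VertexDecomposableOn G Finset.univ

/-- The restriction of `G` to `A` codismantles to its restriction to `B`. -/
inductive CodisTo (G : SimpleGraph V) [DecidableEq V] : Finset V → Finset V → Prop
  | refl (A : Finset V) : CodisTo G A A
  | step {A B : Finset V} {x : V} (h : x ∈ A) (hc : CodominatedOn G A x)
      (ht : CodisTo G (A.erase x) B) : CodisTo G A B

/-- `L` is a codismantling sequence for the subgraph of `G` induced on `A`. -/
def CodisSeq (G : SimpleGraph V) [DecidableEq V] : Finset V → List V → Prop
  | A, [] => ∀ x ∈ A, ∀ y ∈ A, ¬ G.Adj x y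
  | A, x :: xs => x ∈ A ∧ CodominatedOn G A x ∧ CodisSeq G (A.erase x) xs

/-- `C` is a vertex cover of `G`. -/
def IsVertexCover (G : SimpleGraph V) (C : Set V) : Prop :=
  ∀ ⦃u v : V⦄, G.Adj u v → u ∈ C ∨ v ∈ C

/-- The co-chordal cover number: the minimum number of co-chordal subgraphs of `G`
covering all edges of `G`. -/
noncomputable def cochord (G : SimpleGraph V) : ℕ :=
  sInf {k | ∃ H : Fin k → G.Subgraph, (∀ i, Chordal ((H i).coeᶜ)) ∧
    ∀ e ∈ G.edgeSet, ∃ i, e ∈ (H i).edgeSet}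

/-- The domination number of a graph. -/
noncomputable def domNum {W : Type*} (K : SimpleGraph W) : ℕ :=
  sInf {n | ∃ D : Finset W, (∀ v : W, v ∈ D ∨ ∃ u ∈ D, K.Adj u v) ∧ D.card = n}


/-- `l` is a walk from `a` to `b` with all vertices in `B`. -/
def PIn (G : SimpleGraph V) (B : Set V) (a b : V) (l : List V) : Prop :=
  l.IsChain G.Adj ∧ l.head? = some a ∧ l.getLast? = some b ∧ ∀ v ∈ l, v ∈ B

/-- `b` is reachable from `a` within `B`. -/
def RIn (G : SimpleGraph V) (B : Set V) (a b : V) : Prop := ∃ l, PIn G B a b l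

lemma rin_refl {G : SimpleGraph V} {B : Set V} {a : V} (h : a ∈ B) : RIn G B a a :=
  ⟨[a], by simp [PIn], by simp [List.getLast?], by simpa⟩

lemma rin_left_mem {G : SimpleGraph V} {B : Set V} {a b : V} (h : RIn G B a b) : a ∈ B := by
  obtain ⟨l, hc, hh, hl, hB⟩ := h
  exact hB a (List.mem_of_mem_head? (by simp [hh]))

lemma rin_right_mem {G : SimpleGraph V} {B : Set V} {a b : V} (h : RIn G B a b) : b ∈ B := by
  obtain ⟨l, hc, hh, hl, hB⟩ := h
  exact hB b (List.mem_of_mem_getLast? (by simp [hl]))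

lemma rin_symm {G : SimpleGraph V} {B : Set V} {a b : V} (h : RIn G B a b) : RIn G B b a := by
  obtain ⟨l, hc, hh, hl, hB⟩ := h
  refine ⟨l.reverse, ?_, ?_, ?_, ?_⟩
  · rw [List.isChain_reverse]
    exact hc.imp (fun _ _ h => h.symm)
  · rwa [List.head?_reverse]
  · rwa [List.getLast?_reverse]
  · simpa using hB

lemma rin_trans {G : SimpleGraph V} {B : Set V} {a b c : V} (h1 : RIn G B a b)
    (h2 : RIn G B b c) : RIn G B a c := by
  obtain ⟨l, hc1, hh1, hl1, hB1⟩ := h1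
  obtain ⟨m, hc2, hh2, hl2, hB2⟩ := h2
  have hm : m = b :: m.tail := by
    cases m with
    | nil => simp at hh2
    | cons u t => simp at hh2; simp [hh2]
  refine ⟨l ++ m.tail, ?_, ?_, ?_, ?_⟩
  · rw [List.isChain_append]
    refine ⟨hc1, hc2.tail, ?_⟩
    intro x hx y hy
    rw [hl1, Option.mem_some_iff] at hx
    subst hx
    have := hc2
    rw [hm, List.isChain_cons] at this
    exact this.1 y hy
  · rw [List.head?_append, hh1]; rfl
  · rcases eq_or_ne m.tail [] with h | h
    · rw [hm, h] at hl2
      simp at hl2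
      subst hl2
      simpa [h]
    · obtain ⟨y, t, ht⟩ := List.exists_cons_of_ne_nil h
      rw [List.getLast?_append]
      rw [hm, ht, List.getLast?_cons_cons] at hl2
      rw [ht, hl2]; rfl
  · intro v hv
    rcases List.mem_append.mp hv with h | h
    · exact hB1 v h
    · exact hB2 v (List.mem_of_mem_tail h)

lemma rin_step {G : SimpleGraph V} {B : Set V} {a b c : V} (h1 : RIn G B a b)
    (hadj : G.Adj b c) (hc : c ∈ B) : RIn G B a c := by
  refine rin_trans h1 ⟨[b, c], ?_, rfl, rfl, ?_⟩
  · simp [hadj]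
  · intro v hv
    simp at hv
    rcases hv with h | h
    · exact h ▸ rin_right_mem h1
    · exact h ▸ hc

lemma rin_mono {G : SimpleGraph V} {B B' : Set V} (hBB : B ⊆ B') {a b : V}
    (h : RIn G B a b) : RIn G B' a b := by
  obtain ⟨l, hc, hh, hl, hB⟩ := h
  exact ⟨l, hc, hh, hl, fun v hv => hBB (hB v hv)⟩

/-- every vertex on a walk from `a` is reachable from `a`. -/
lemma rin_of_mem_walk {G : SimpleGraph V} {B : Set V} {a b v : V} {l : List V}
    (h : PIn G B a b l) (hv : v ∈ l) : RIn G B a v := by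
  obtain ⟨hc, hh, hl, hB⟩ := h
  obtain ⟨i, hi, rfl⟩ := List.getElem_of_mem hv
  refine ⟨l.take (i+1), hc.take _, ?_, ?_, fun w hw => hB w (List.mem_of_mem_take hw)⟩
  · rw [List.head?_eq_getElem?] at hh ⊢
    rw [List.getElem?_take, if_pos (by omega)]
    exact hh
  · rw [List.getLast?_eq_getElem?]
    have hlen : (l.take (i+1)).length = i + 1 := by
      rw [List.length_take]; omega
    rw [hlen]
    simp only [Nat.add_sub_cancel]
    rw [List.getElem?_take, if_pos (by omega)]
    exact (List.getElem?_eq_getElem hi)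

/-- frontier lemma: a walk starting in `C` and ending outside `C` crosses the boundary. -/
lemma exists_frontier {G : SimpleGraph V} (C : Set V) :
    ∀ (l : List V) {a b : V}, l.Chain' G.Adj → l.head? = some a → l.getLast? = some b →
      a ∈ C → b ∉ C → ∃ u v, G.Adj u v ∧ u ∈ C ∧ v ∉ C ∧ u ∈ l ∧ v ∈ l := by
  intro l
  induction l with
  | nil => intro a b _ hh; simp at hh
  | cons x t ih =>
    intro a b hc hh hl ha hb
    simp at hh
    subst hh
    cases t with
    | nil =>
      simp [List.getLast?] at hl
      subst hl; exact absurd ha hb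
    | cons y t' =>
      rcases Classical.em (y ∈ C) with hy | hy
      · obtain ⟨u, v, h1, h2, h3, h4, h5⟩ :=
          ih (a := y) (b := b) hc.tail rfl (by rwa [List.getLast?_cons_cons] at hl) hy hb
        exact ⟨u, v, h1, h2, h3, List.mem_cons_of_mem _ h4, List.mem_cons_of_mem _ h5⟩
      · refine ⟨x, y, ?_, ha, hy, List.mem_cons_self, List.mem_cons_of_mem _ (List.mem_cons_self)⟩
        exact (List.isChain_cons.mp hc).1 y rfl

lemma exists_min_measure {α : Sort*} {P : α → Prop} (f : α → ℕ) (h : ∃ x, P x) :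
    ∃ x, P x ∧ ∀ y, P y → f x ≤ f y := by
  obtain ⟨x0, hx0⟩ := h
  have hS : {n | ∃ x, P x ∧ f x = n}.Nonempty := ⟨f x0, x0, hx0, rfl⟩
  obtain ⟨x, hx, hfx⟩ := Nat.sInf_mem hS
  exact ⟨x, hx, fun y hy => hfx ▸ Nat.sInf_le ⟨y, hy, rfl⟩⟩

lemma pin_head_getElem {G : SimpleGraph V} {B : Set V} {a b : V} {l : List V}
    (h : PIn G B a b l) (h0 : 0 < l.length) : l[0]'h0 = a := by
  have := h.2.1
  rw [List.head?_eq_getElem?, List.getElem?_eq_getElem h0] at this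
  simpa using this

lemma pin_last_getElem {G : SimpleGraph V} {B : Set V} {a b : V} {l : List V}
    (h : PIn G B a b l) (h0 : 0 < l.length) : l[l.length - 1]'(by omega) = b := by
  have := h.2.2.1
  rw [List.getLast?_eq_getElem?, List.getElem?_eq_getElem (by omega)] at this
  simpa using this

lemma pin_adj {G : SimpleGraph V} {B : Set V} {a b : V} {l : List V}
    (h : PIn G B a b l) {i : ℕ} (hi : i + 1 < l.length) :
    G.Adj (l[i]'(by omega)) (l[i+1]'hi) := by
  have := List.isChain_iff_getElem.mp h.1 i (by omega)
  simpa [List.get_eq_getElem] using this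

/-- splicing out a chord gives a shorter walk. -/
lemma pin_splice {G : SimpleGraph V} {B : Set V} {a b : V} {l : List V}
    (h : PIn G B a b l) {i j : ℕ} (hij : i < j) (hj : j < l.length)
    (hadj : G.Adj (l[i]'(by omega)) (l[j]'hj)) :
    PIn G B a b (l.take (i+1) ++ l.drop j) := by
  obtain ⟨hc, hh, hl, hB⟩ := h
  have hi : i < l.length := by omega
  have htl : (l.take (i+1)).getLast? = some (l[i]'hi) := by
    rw [List.getLast?_eq_getElem?]
    have hlen : (l.take (i+1)).length = i + 1 := by rw [List.length_take]; omega
    rw [hlen]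
    simp only [Nat.add_sub_cancel]
    rw [List.getElem?_take, if_pos (by omega)]
    exact List.getElem?_eq_getElem hi
  refine ⟨?_, ?_, ?_, ?_⟩
  · rw [List.isChain_append]
    refine ⟨hc.take _, hc.drop _, ?_⟩
    intro x hx y hy
    rw [htl, Option.mem_some_iff] at hx
    rw [List.head?_drop, Option.mem_def, List.getElem?_eq_getElem hj, Option.some_inj] at hy
    subst hx; subst hy
    exact hadj
  · rw [List.head?_append, List.head?_take, if_neg (by omega), hh]; rfl
  · rw [List.getLast?_append, List.getLast?_drop, if_neg (by omega), hl]; rfl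
  · intro v hv
    rcases List.mem_append.mp hv with h | h
    · exact hB v (List.mem_of_mem_take h)
    · exact hB v (List.mem_of_mem_drop h)

/-- splicing out a repeated vertex gives a shorter walk. -/
lemma pin_splice_eq {G : SimpleGraph V} {B : Set V} {a b : V} {l : List V}
    (h : PIn G B a b l) {i j : ℕ} (hij : i < j) (hj : j < l.length)
    (heq : (l[i]'(by omega)) = l[j]'hj) :
    PIn G B a b (l.take (i+1) ++ l.drop (j+1)) := by
  obtain ⟨hc, hh, hl, hB⟩ := h
  have hi : i < l.length := by omega
  have htl : (l.take (i+1)).getLast? = some (l[i]'hi) := by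
    rw [List.getLast?_eq_getElem?]
    have hlen : (l.take (i+1)).length = i + 1 := by rw [List.length_take]; omega
    rw [hlen]
    simp only [Nat.add_sub_cancel]
    rw [List.getElem?_take, if_pos (by omega)]
    exact List.getElem?_eq_getElem hi
  refine ⟨?_, ?_, ?_, ?_⟩
  · rw [List.isChain_append]
    refine ⟨hc.take _, hc.drop _, ?_⟩
    intro x hx y hy
    rw [htl, Option.mem_some_iff] at hx
    subst hx
    rw [List.head?_drop, Option.mem_def] at hy
    have hj1 : j + 1 < l.length := by
      rcases Nat.lt_or_ge (j+1) l.length with h' | h'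
      · exact h'
      · rw [List.getElem?_eq_none (by omega)] at hy; simp at hy
    rw [List.getElem?_eq_getElem hj1, Option.some_inj] at hy
    subst hy
    rw [heq]
    exact List.isChain_iff_getElem.mp hc j (by omega)
  · rw [List.head?_append, List.head?_take, if_neg (by omega), hh]; rfl
  · rcases Nat.lt_or_ge (j+1) l.length with h' | h'
    · rw [List.getLast?_append, List.getLast?_drop, if_neg (by omega), hl]; rfl
    · have : l.drop (j+1) = [] := List.drop_eq_nil_of_le (by omega)
      rw [this, List.append_nil, htl]
      have : j = l.length - 1 := by omega
      subst this
      rw [heq]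
      congr 1
      have := hl
      rw [List.getLast?_eq_getElem?, List.getElem?_eq_getElem (by omega)] at this
      simpa using this
  · intro v hv
    rcases List.mem_append.mp hv with h | h
    · exact hB v (List.mem_of_mem_take h)
    · exact hB v (List.mem_of_mem_drop h)

/-- a shortest walk is an induced path. -/
lemma exists_induced_path {G : SimpleGraph V} {B : Set V} {x y : V} (h : RIn G B x y) :
    ∃ l : List V, PIn G B x y l ∧ l.Nodup ∧
      ∀ i j (hij : i + 1 < j) (hj : j < l.length), ¬ G.Adj (l[i]'(by omega)) (l[j]'hj) := by
  obtain ⟨l, hl, hmin⟩ := exists_min_measure (fun l : List V => l.length) h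
  refine ⟨l, hl, ?_, ?_⟩
  · rw [List.nodup_iff_getElem?_ne_getElem?]
    intro i j hij hj heq
    have hi : i < l.length := lt_trans hij hj
    rw [List.getElem?_eq_getElem hj, List.getElem?_eq_getElem hi] at heq
    have heq' : (l[i]'hi) = l[j]'hj := Option.some_inj.mp heq
    have hsp := pin_splice_eq hl hij hj heq'
    have := hmin _ hsp
    simp only [List.length_append, List.length_take, List.length_drop] at this
    omega
  · intro i j hij hj hadj
    have hsp := pin_splice hl (by omega) hj hadj
    have := hmin _ hsp
    simp only [List.length_append, List.length_take, List.length_drop] at this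
    omega

lemma cyc_adj_val {m : ℕ} (i j : Fin (m + 2)) (hij : i.val < j.val) :
    (cycleGraph (m + 2)).Adj i j ↔ (j.val = i.val + 1 ∨ (i.val = 0 ∧ j.val = m + 1)) := by
  rw [cycleGraph_adj]
  have hj2 : j.val < m + 2 := j.isLt
  have hsub1 : (i - j).val = m + 2 - j.val + i.val := by
    rw [Fin.sub_def]
    simp only
    exact Nat.mod_eq_of_lt (by omega)
  have hsub2 : (j - i).val = j.val - i.val := by
    rw [Fin.sub_def]
    simp only
    have : m + 2 - i.val + j.val = (j.val - i.val) + (m + 2) := by omega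
    rw [this, Nat.add_mod_right]
    exact Nat.mod_eq_of_lt (by omega)
  constructor
  · rintro (h | h)
    · have := congrArg Fin.val h
      rw [hsub1, Fin.val_one] at this
      right; omega
    · have := congrArg Fin.val h
      rw [hsub2, Fin.val_one] at this
      left; omega
  · rintro (h | h)
    · right
      apply Fin.ext
      rw [hsub2, Fin.val_one]; omega
    · left
      apply Fin.ext
      rw [hsub1, Fin.val_one]; omega

/-- build a cycle embedding from a cyclically-induced vertex function. -/
noncomputable def buildCycleEmb {G : SimpleGraph V} {m : ℕ} (c : ℕ → V)
    (hadj : ∀ i j, i < j → j < m + 2 → (G.Adj (c i) (c j) ↔ (j = i + 1 ∨ (i = 0 ∧ j = m + 1))))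
    (hinj : ∀ i j, i < j → j < m + 2 → c i ≠ c j) : cycleGraph (m + 2) ↪g G := by
  have key : ∀ i j : Fin (m + 2), i.val < j.val →
      (G.Adj (c i.val) (c j.val) ↔ (cycleGraph (m + 2)).Adj i j) := by
    intro i j h
    rw [cyc_adj_val i j h, hadj i.val j.val h j.isLt]
  refine ⟨⟨fun i => c i.val, ?_⟩, ?_⟩
  · intro i j h
    rcases lt_trichotomy i.val j.val with hlt | heq | hgt
    · exact absurd h (hinj i.val j.val hlt j.isLt)
    · exact Fin.ext heq
    · exact absurd h.symm (hinj j.val i.val hgt i.isLt)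
  · intro i j
    rcases lt_trichotomy i.val j.val with hlt | heq | hgt
    · exact key i j hlt
    · have : i = j := Fin.ext heq
      subst this
      simp [SimpleGraph.irrefl]
    · rw [G.adj_comm, (cycleGraph (m+2)).adj_comm]
      exact key j i hgt



/-- Two internally-disjoint induced paths between nonadjacent `x,y`, with no edges
between their interiors, contradict chordality. -/
lemma no_two_paths {G : SimpleGraph V} (hG : Chordal G) {n1 n2 : ℕ}
    (h1 : 2 ≤ n1) (h2 : 2 ≤ n2) (f g : ℕ → V)
    (hfg0 : f 0 = g 0) (hfgn : f n1 = g n2)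
    (hfa : ∀ i, i + 1 ≤ n1 → G.Adj (f i) (f (i+1)))
    (hga : ∀ i, i + 1 ≤ n2 → G.Adj (g i) (g (i+1)))
    (hfn : ∀ i j, i + 1 < j → j ≤ n1 → ¬ G.Adj (f i) (f j))
    (hgn : ∀ i j, i + 1 < j → j ≤ n2 → ¬ G.Adj (g i) (g j))
    (hfi : ∀ i j, i ≤ n1 → j ≤ n1 → f i = f j → i = j)
    (hgi : ∀ i j, i ≤ n2 → j ≤ n2 → g i = g j → i = j)
    (hcross : ∀ i j, 0 < i → i < n1 → 0 < j → j < n2 →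
      f i ≠ g j ∧ ¬ G.Adj (f i) (g j)) : False := by
  classical
  obtain ⟨n, hn⟩ : ∃ n, n = n1 + n2 := ⟨_, rfl⟩
  set c : ℕ → V := fun i => if i ≤ n1 then f i else g (n - i) with hc
  have hcf : ∀ i, i ≤ n1 → c i = f i := fun i hi => if_pos hi
  have hcg : ∀ i, n1 < i → c i = g (n - i) := fun i hi => if_neg (by omega)
  -- adjacency characterization
  have key1 : ∀ i j, i < j → j < n → (G.Adj (c i) (c j) ↔ (j = i + 1 ∨ (i = 0 ∧ j = n - 1))) := by
    intro i j hij hjn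
    rcases le_or_gt j n1 with hA | hB
    · -- both in f-part
      rw [hcf i (by omega), hcf j hA]
      rcases eq_or_ne j (i+1) with rfl | hne
      · simpa using hfa i hA
      · have hna : ¬ G.Adj (f i) (f j) := hfn i j (by omega) hA
        simp only [hna, false_iff]
        omega
    · rcases le_or_gt i n1 with hiA | hiB
      · -- i in f-part, j in g-part
        rw [hcf i hiA, hcg j hB]
        rcases Nat.eq_zero_or_pos i with rfl | hipos
        · -- i = 0 : c i = g 0
          rw [hfg0]
          rcases eq_or_ne (n - j) 1 with he | hne
          · rw [he]
            have ha : G.Adj (g 0) (g 1) := hga 0 (by omega)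
            simp only [ha, true_iff, true_and]
            omega
          · have hna : ¬ G.Adj (g 0) (g (n - j)) := hgn 0 (n - j) (by omega) (by omega)
            simp only [hna, false_iff]
            omega
        · rcases eq_or_ne i n1 with rfl | hin1
          · -- i = n1 : c i = g n2
            rw [hfgn]
            rcases eq_or_ne (n - j) (n2 - 1) with he | hne
            · rw [he]
              have ha : G.Adj (g (n2 - 1)) (g n2) := by
                have := hga (n2 - 1) (by omega)
                rwa [Nat.sub_add_cancel (by omega)] at this
              simp only [ha.symm, true_iff]
              omega
            · have hna : ¬ G.Adj (g (n - j)) (g n2) := hgn (n - j) n2 (by omega) le_rfl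
              rw [G.adj_comm]
              simp only [hna, false_iff]
              omega
          · -- 0 < i < n1 : cross
            have hna := (hcross i (n - j) hipos (by omega) (by omega) (by omega)).2
            simp only [hna, false_iff]
            omega
      · -- both in g-part
        rw [hcg i hiB, hcg j hB]
        rcases eq_or_ne j (i + 1) with rfl | hne
        · have ha : G.Adj (g (n - (i+1))) (g (n - (i+1) + 1)) := hga _ (by omega)
          have heq : n - (i+1) + 1 = n - i := by omega
          rw [heq] at ha
          simp [ha.symm]
        · have hna : ¬ G.Adj (g (n - j)) (g (n - i)) := hgn (n - j) (n - i) (by omega) (by omega)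
          rw [G.adj_comm]
          simp only [hna, false_iff]
          omega
  -- injectivity
  have key2 : ∀ i j, i < j → j < n → c i ≠ c j := by
    intro i j hij hjn heq
    rcases le_or_gt j n1 with hA | hB
    · rw [hcf i (by omega), hcf j hA] at heq
      have := hfi i j (by omega) hA heq
      omega
    · rcases le_or_gt i n1 with hiA | hiB
      · rw [hcf i hiA, hcg j hB] at heq
        rcases Nat.eq_zero_or_pos i with rfl | hipos
        · rw [hfg0] at heq
          have := hgi 0 (n - j) (by omega) (by omega) heq
          omega
        · rcases eq_or_ne i n1 with rfl | hin1
          · rw [hfgn] at heq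
            have := hgi n2 (n - j) le_rfl (by omega) heq
            omega
          · exact (hcross i (n - j) hipos (by omega) (by omega) (by omega)).1 heq
      · rw [hcg i hiB, hcg j hB] at heq
        have := hgi (n - i) (n - j) (by omega) (by omega) heq
        omega
  obtain ⟨m, hm⟩ : ∃ m, n = m + 2 := ⟨n - 2, by omega⟩
  have hadj : ∀ i j, i < j → j < m + 2 → (G.Adj (c i) (c j) ↔ (j = i + 1 ∨ (i = 0 ∧ j = m + 1))) := by
    intro i j hij hjm
    rw [key1 i j hij (by omega)]
    constructor <;>
    · rintro (h | ⟨h0, h'⟩)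
      · left; exact h
      · right; exact ⟨h0, by omega⟩
  have hinj : ∀ i j, i < j → j < m + 2 → c i ≠ c j := fun i j hij hjm => key2 i j hij (by omega)
  exact (hG (m + 2) (by omega)).false (buildCycleEmb c hadj hinj)



/-- Extract an induced-path on indices from a reachability fact. -/
lemma induced_path_fun {G : SimpleGraph V} {C : Set V} {x y : V}
    (hxy : x ≠ y) (hnadj : ¬ G.Adj x y)
    (hr : RIn G (insert x (insert y C)) x y) :
    ∃ (n1 : ℕ) (f : ℕ → V), 2 ≤ n1 ∧ f 0 = x ∧ f n1 = y ∧
      (∀ i, i + 1 ≤ n1 → G.Adj (f i) (f (i+1))) ∧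
      (∀ i j, i + 1 < j → j ≤ n1 → ¬ G.Adj (f i) (f j)) ∧
      (∀ i j, i ≤ n1 → j ≤ n1 → f i = f j → i = j) ∧
      (∀ i, 0 < i → i < n1 → f i ∈ C) := by
  obtain ⟨l, hp, hnd, hnc⟩ := exists_induced_path hr
  have h0 : 0 < l.length := by
    cases l
    · exact absurd hp.2.1 (by simp)
    · simp
  have hhead := pin_head_getElem hp h0
  have hlast := pin_last_getElem hp h0
  have hlen3 : 3 ≤ l.length := by
    by_contra hlt
    push_neg at hlt
    have h12 : l.length = 1 ∨ l.length = 2 := by omega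
    rcases h12 with hl | hl
    · have h1 : l.length - 1 = 0 := by omega
      simp only [h1] at hlast
      exact hxy (hhead.symm.trans hlast)
    · have h1 : l.length - 1 = 1 := by omega
      simp only [h1] at hlast
      have hadj := pin_adj hp (i := 0) (by omega)
      rw [hhead, hlast] at hadj
      exact hnadj hadj
  refine ⟨l.length - 1, fun i => l.getD i x, by omega, ?_, ?_, ?_, ?_, ?_, ?_⟩
  · show l.getD 0 x = x
    rw [List.getD_eq_getElem l x h0]; exact hhead
  · show l.getD (l.length - 1) x = y
    rw [List.getD_eq_getElem l x (n := l.length - 1) (by omega)]; exact hlast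
  · intro i hi
    show G.Adj (l.getD i x) (l.getD (i+1) x)
    rw [List.getD_eq_getElem l x (n := i) (by omega),
      List.getD_eq_getElem l x (n := i+1) (by omega)]
    exact pin_adj hp (by omega)
  · intro i j hij hj
    show ¬ G.Adj (l.getD i x) (l.getD j x)
    rw [List.getD_eq_getElem l x (n := i) (by omega),
      List.getD_eq_getElem l x (n := j) (by omega)]
    exact hnc i j hij (by omega)
  · intro i j hi hj heq
    simp only at heq
    rw [List.getD_eq_getElem l x (n := i) (by omega),
      List.getD_eq_getElem l x (n := j) (by omega)] at heq
    exact (hnd.getElem_inj_iff).mp heq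
  · intro i h0i hin
    have hi : i < l.length := by omega
    show l.getD i x ∈ C
    rw [List.getD_eq_getElem l x hi]
    have hmem : l[i] ∈ insert x (insert y C) := hp.2.2.2 _ (List.getElem_mem hi)
    have hne_x : l[i] ≠ x := by
      rw [← hhead]
      intro h
      have := (hnd.getElem_inj_iff).mp h
      omega
    have hne_y : l[i] ≠ y := by
      rw [← hlast]
      intro h
      have := (hnd.getElem_inj_iff).mp h
      omega
    rcases hmem with h | h | h
    · exact absurd h hne_x
    · exact absurd h hne_y
    · exact h

/-- Key chordality consequence: two "components" with two common nonadjacent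
neighbors outside them yield an induced long cycle. -/
lemma clique_of_min_sep {G : SimpleGraph V} (hG : Chordal G) {Ca Cb : Set V}
    (hconn_a : ∀ u ∈ Ca, ∀ w ∈ Ca, RIn G Ca u w)
    (hconn_b : ∀ u ∈ Cb, ∀ w ∈ Cb, RIn G Cb u w)
    (hdisj : ∀ u ∈ Ca, ∀ v ∈ Cb, u ≠ v ∧ ¬ G.Adj u v)
    {x y : V} (hxy : x ≠ y) (hnadj : ¬ G.Adj x y)
    (hxa : ∃ u ∈ Ca, G.Adj u x) (hya : ∃ u ∈ Ca, G.Adj u y)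
    (hxb : ∃ u ∈ Cb, G.Adj u x) (hyb : ∃ u ∈ Cb, G.Adj u y) : False := by
  -- reachability x → y through Ca
  have hreach : ∀ (C : Set V), (∀ u ∈ C, ∀ w ∈ C, RIn G C u w) →
      (∃ u ∈ C, G.Adj u x) → (∃ u ∈ C, G.Adj u y) →
      RIn G (insert x (insert y C)) x y := by
    intro C hconn hx hy
    obtain ⟨u, hu, hux⟩ := hx
    obtain ⟨w, hw, hwy⟩ := hy
    have h1 : RIn G (insert x (insert y C)) u w :=
      rin_mono (fun v hv => Set.mem_insert_of_mem _ (Set.mem_insert_of_mem _ hv)) (hconn u hu w hw)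
    have h2 : RIn G (insert x (insert y C)) x u := by
      refine rin_symm (rin_step (rin_refl ?_) hux ?_)
      · exact Set.mem_insert_of_mem _ (Set.mem_insert_of_mem _ hu)
      · exact Set.mem_insert _ _
    have h3 : RIn G (insert x (insert y C)) x w := rin_trans h2 h1
    exact rin_step h3 hwy (Set.mem_insert_of_mem _ (Set.mem_insert _ _))
  obtain ⟨n1, f, hn1, hf0, hfn1, hfa, hfn, hfi, hfint⟩ :=
    induced_path_fun hxy hnadj (hreach Ca hconn_a hxa hya)
  obtain ⟨n2, g, hn2, hg0, hgn2, hga, hgn, hgi, hgint⟩ :=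
    induced_path_fun hxy hnadj (hreach Cb hconn_b hxb hyb)
  refine no_two_paths hG hn1 hn2 f g (by rw [hf0, hg0]) (by rw [hfn1, hgn2]) hfa hga hfn hgn hfi hgi ?_
  intro i j h1 h2 h3 h4
  exact hdisj _ (hfint i h1 h2) _ (hgint j h3 h4)


/-- `y` is simplicial in the subgraph of `G` induced on `A`. -/
def SimplOn (G : SimpleGraph V) (A : Finset V) (y : V) : Prop :=
  y ∈ A ∧ ∀ z ∈ A, ∀ w ∈ A, G.Adj y z → G.Adj y w → z = w ∨ G.Adj z w

lemma simplOn_of_clique {G : SimpleGraph V} {A : Finset V} {y : V} (hy : y ∈ A)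
    (hcl : ∀ x ∈ A, ∀ z ∈ A, x ≠ z → G.Adj x z) : SimplOn G A y := by
  refine ⟨hy, fun z hz w hw _ _ => ?_⟩
  rcases eq_or_ne z w with h | h
  · exact Or.inl h
  · exact Or.inr (hcl z hz w hw h)

/-- Dirac's theorem: a chordal graph is a clique or has two nonadjacent
simplicial vertices. -/
lemma dirac [DecidableEq V] {G : SimpleGraph V} (hG : Chordal G) :
    ∀ (n : ℕ) (A : Finset V), A.card ≤ n → A.Nonempty →
      (∀ x ∈ A, ∀ z ∈ A, x ≠ z → G.Adj x z) ∨
      ∃ y z, SimplOn G A y ∧ SimplOn G A z ∧ y ≠ z ∧ ¬ G.Adj y z := by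
  classical
  intro n
  induction n with
  | zero =>
    intro A hcard hne
    rw [Nat.le_zero, Finset.card_eq_zero] at hcard
    subst hcard
    exact absurd hne (by simp)
  | succ n ih =>
    intro A hcard hne
    rcases Classical.em (∀ x ∈ A, ∀ z ∈ A, x ≠ z → G.Adj x z) with hcl | hncl
    · exact Or.inl hcl
    · right
      push_neg at hncl
      obtain ⟨a, ha, b, hb, hab, hnadj⟩ := hncl
      -- find a minimal separator
      have hsep0 : ∃ S : Finset V, S ⊆ A ∧ a ∉ S ∧ b ∉ S ∧ ¬ RIn G (↑A \ ↑S) a b := by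
        refine ⟨(A.erase a).erase b, (Finset.erase_subset _ _).trans (Finset.erase_subset _ _),
          fun h => (Finset.mem_erase.mp (Finset.mem_of_mem_erase h)).1 rfl,
          fun h => (Finset.mem_erase.mp h).1 rfl, ?_⟩
        rintro ⟨l, hp⟩
        obtain ⟨u, v, huv, hu, hv, hul, hvl⟩ :=
          exists_frontier {a} l hp.1 hp.2.1 hp.2.2.1 rfl (Ne.symm hab)
        have hvA : v ∈ (↑A : Set V) \ ↑((A.erase a).erase b) := hp.2.2.2 v hvl
        have : v = a ∨ v = b := by
          rcases hvA with ⟨hv1, hv2⟩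
          by_contra hcon
          push_neg at hcon
          exact hv2 (by simp [Finset.mem_erase, hcon.2, hcon.1, hv1])
        rcases this with rfl | rfl
        · exact hv rfl
        · rw [Set.mem_singleton_iff] at hu
          subst hu
          exact hnadj huv
      obtain ⟨S, ⟨hSA, haS, hbS, hsep⟩, hmin⟩ :=
        exists_min_measure (fun S : Finset V => S.card) hsep0
      set D : Set V := ↑A \ ↑S with hD
      have haD : a ∈ D := ⟨ha, haS⟩
      have hbD : b ∈ D := ⟨hb, hbS⟩
      -- the two components
      set Ca : Set V := {z | RIn G D a z} with hCa
      set Cb : Set V := {z | RIn G D b z} with hCb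
      have haCa : a ∈ Ca := rin_refl haD
      have hbCb : b ∈ Cb := rin_refl hbD
      have hCaD : Ca ⊆ D := fun z hz => rin_right_mem hz
      have hCbD : Cb ⊆ D := fun z hz => rin_right_mem hz
      have hdisj : ∀ u ∈ Ca, ∀ v ∈ Cb, u ≠ v ∧ ¬ G.Adj u v := by
        intro u hu v hv
        constructor
        · rintro rfl
          exact hsep (rin_trans hu (rin_symm hv))
        · intro hadj
          exact hsep (rin_trans (rin_step hu hadj (hCbD hv)) (rin_symm hv))
      have hbCa : b ∉ Ca := fun h => hsep h
      have haCb : a ∉ Cb := fun h => hsep (rin_symm h)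
      -- connectivity of the components
      have hconn : ∀ (c : V), ∀ u ∈ {z | RIn G D c z}, ∀ w ∈ {z | RIn G D c z},
          RIn G {z | RIn G D c z} u w := by
        intro c u hu w hw
        obtain ⟨l, hp⟩ := rin_trans (rin_symm hu) hw
        refine ⟨l, hp.1, hp.2.1, hp.2.2.1, fun v hv => ?_⟩
        exact rin_trans hu (rin_of_mem_walk hp hv)
      -- every separator vertex has neighbors in both components
      have hnbr : ∀ x ∈ S, (∃ u ∈ Ca, G.Adj u x) ∧ (∃ u ∈ Cb, G.Adj u x) := by
        intro x hxS
        have hxA : x ∈ A := hSA hxS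
        have hS' : ¬ (S.erase x ⊆ A ∧ a ∉ S.erase x ∧ b ∉ S.erase x ∧
            ¬ RIn G (↑A \ ↑(S.erase x)) a b) := by
          intro hP
          have := hmin _ hP
          have := Finset.card_erase_lt_of_mem hxS
          omega
        have hrin : RIn G (↑A \ ↑(S.erase x)) a b := by
          by_contra hcon
          exact hS' ⟨(Finset.erase_subset _ _).trans hSA,
            fun h => haS (Finset.mem_of_mem_erase h),
            fun h => hbS (Finset.mem_of_mem_erase h), hcon⟩
        obtain ⟨l, hp⟩ := hrin
        constructor
        · obtain ⟨u, v, huv, hu, hv, hul, hvl⟩ :=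
            exists_frontier Ca l hp.1 hp.2.1 hp.2.2.1 haCa hbCa
          have hvmem : v ∈ (↑A : Set V) \ ↑(S.erase x) := hp.2.2.2 v hvl
          have hvx : v = x := by
            by_contra hne
            apply hv
            have hvD : v ∈ D := ⟨hvmem.1, fun hvS => hvmem.2 (Finset.mem_erase.mpr ⟨hne, hvS⟩)⟩
            exact rin_step hu huv hvD
          rw [hvx] at huv
          exact ⟨u, hu, huv⟩
        · obtain ⟨l', hp'⟩ := rin_symm ⟨l, hp⟩
          obtain ⟨u, v, huv, hu, hv, hul, hvl⟩ :=
            exists_frontier Cb l' hp'.1 hp'.2.1 hp'.2.2.1 hbCb haCb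
          have hvmem : v ∈ (↑A : Set V) \ ↑(S.erase x) := hp'.2.2.2 v hvl
          have hvx : v = x := by
            by_contra hne
            apply hv
            have hvD : v ∈ D := ⟨hvmem.1, fun hvS => hvmem.2 (Finset.mem_erase.mpr ⟨hne, hvS⟩)⟩
            exact rin_step hu huv hvD
          rw [hvx] at huv
          exact ⟨u, hu, huv⟩
      -- S is a clique
      have hScl : ∀ x ∈ S, ∀ y ∈ S, x ≠ y → G.Adj x y := by
        intro x hx y hy hne
        by_contra hnadjxy
        obtain ⟨hxa, hxb⟩ := hnbr x hx
        obtain ⟨hya, hyb⟩ := hnbr y hy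
        exact clique_of_min_sep hG (hconn a) (hconn b) hdisj hne hnadjxy hxa hya hxb hyb
      -- one simplicial vertex in each side
      have side : ∀ c : V, c ∈ D → (∀ x ∈ S, ∃ u ∈ {z | RIn G D c z}, G.Adj u x) →
          ∃ y, SimplOn G A y ∧ RIn G D c y := by
        intro c hcD _hcnb
        set Cc : Set V := {z | RIn G D c z} with hCc
        have hcCc : c ∈ Cc := rin_refl hcD
        set Ac : Finset V := A.filter (fun z => z ∈ S ∨ z ∈ Cc) with hAc
        have hAcA : Ac ⊆ A := Finset.filter_subset _ _
        have hcAc : c ∈ Ac := Finset.mem_filter.mpr ⟨hcD.1, Or.inr hcCc⟩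
        -- a vertex of D adjacent to a vertex of Cc is in Cc
        have hstep : ∀ y ∈ Cc, ∀ z ∈ A, G.Adj y z → z ∈ Ac := by
          intro y hy z hzA hadj
          rcases Classical.em (z ∈ S) with hzS | hzS
          · exact Finset.mem_filter.mpr ⟨hzA, Or.inl hzS⟩
          · exact Finset.mem_filter.mpr ⟨hzA, Or.inr (rin_step hy hadj ⟨hzA, hzS⟩)⟩
        -- lift simpliciality from Ac to A
        have hlift : ∀ y, y ∈ Cc → SimplOn G Ac y → SimplOn G A y := by
          intro y hyCc hsy
          refine ⟨hAcA hsy.1, fun z hz w hw hz' hw' => ?_⟩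
          exact hsy.2 z (hstep y hyCc z hz hz') w (hstep y hyCc w hw hw') hz' hw'
        -- Ac is strictly smaller than A
        have hbAc : b ∈ A \ Ac ∨ a ∈ A \ Ac := by
          rcases Classical.em (c ∈ Ca) with hcCa | hcCa
          · left
            refine Finset.mem_sdiff.mpr ⟨hb, fun hbin => ?_⟩
            rcases (Finset.mem_filter.mp hbin).2 with h | h
            · exact hbS h
            · exact hbCa (rin_trans hcCa h)
          · right
            refine Finset.mem_sdiff.mpr ⟨ha, fun hain => ?_⟩
            rcases (Finset.mem_filter.mp hain).2 with h | h
            · exact haS h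
            · exact hcCa (rin_symm (rin_trans h (rin_symm (rin_refl haD))))
        have hcard' : Ac.card < A.card := by
          rcases hbAc with h | h
          · exact Finset.card_lt_card (Finset.ssubset_iff_of_subset hAcA |>.mpr
              ⟨b, (Finset.mem_sdiff.mp h).1, (Finset.mem_sdiff.mp h).2⟩)
          · exact Finset.card_lt_card (Finset.ssubset_iff_of_subset hAcA |>.mpr
              ⟨a, (Finset.mem_sdiff.mp h).1, (Finset.mem_sdiff.mp h).2⟩)
        rcases ih Ac (by omega) ⟨c, hcAc⟩ with hcl' | ⟨y, z, hsy, hsz, hyz, hnadj'⟩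
        · exact ⟨c, hlift c hcCc (simplOn_of_clique hcAc hcl'), rin_refl hcD⟩
        · -- not both can be in S since S is a clique
          have hyAc := hsy.1
          have hzAc := hsz.1
          rcases (Finset.mem_filter.mp hyAc).2 with hyS | hyCc
          · rcases (Finset.mem_filter.mp hzAc).2 with hzS | hzCc
            · exact absurd (hScl y hyS z hzS hyz) hnadj'
            · exact ⟨z, hlift z hzCc hsz, hzCc⟩
          · exact ⟨y, hlift y hyCc hsy, hyCc⟩
      obtain ⟨ya, hya, hyaCa⟩ := side a haD (fun x hx => (hnbr x hx).1)
      obtain ⟨yb, hyb, hybCb⟩ := side b hbD (fun x hx => (hnbr x hx).2)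
      exact ⟨ya, yb, hya, hyb, (hdisj ya hyaCa yb hybCb).1, (hdisj ya hyaCa yb hybCb).2⟩


/-- In a chordal graph, the component of an edge contains a codominated vertex. -/
lemma exists_codominatedOn [DecidableEq V] {G : SimpleGraph V} (hG : Chordal G)
    {A : Finset V} {u0 v0 : V} (hu0 : u0 ∈ A) (hv0 : v0 ∈ A) (hadj : G.Adj u0 v0) :
    ∃ x ∈ A, CodominatedOn G A x := by
  classical
  set B : Finset V := A.filter (fun z => RIn G ↑A u0 z) with hB
  have hBA : B ⊆ A := Finset.filter_subset _ _
  have hu0B : u0 ∈ B := Finset.mem_filter.mpr ⟨hu0, rin_refl hu0⟩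
  have hv0B : v0 ∈ B := Finset.mem_filter.mpr
    ⟨hv0, rin_step (rin_refl (by exact hu0)) hadj hv0⟩
  -- closure of B under neighborhoods in A
  have hclose : ∀ z ∈ B, ∀ w ∈ A, G.Adj z w → w ∈ B := by
    intro z hz w hw hzw
    exact Finset.mem_filter.mpr ⟨hw, rin_step (Finset.mem_filter.mp hz).2 hzw hw⟩
  -- every vertex of B has a neighbor in B
  have hnb : ∀ z ∈ B, ∃ x ∈ B, G.Adj z x := by
    intro z hz
    rcases eq_or_ne z u0 with rfl | hne
    · exact ⟨v0, hv0B, hadj⟩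
    · obtain ⟨l, hp⟩ := (Finset.mem_filter.mp hz).2
      obtain ⟨u, v, huv, hu, hv, hul, hvl⟩ :=
        exists_frontier {w | w ≠ z} l hp.1 hp.2.1 hp.2.2.1 hne.symm (by simp)
      simp only [Set.mem_setOf_eq, not_not] at hv
      subst hv
      have huB : u ∈ B := Finset.mem_filter.mpr ⟨hp.2.2.2 u hul, rin_of_mem_walk hp hul⟩
      exact ⟨u, huB, huv.symm⟩
  -- a simplicial vertex of B
  have hsimp : ∃ y, SimplOn G B y := by
    rcases dirac hG B.card B le_rfl ⟨u0, hu0B⟩ with hcl | ⟨y, _, hy, _, _, _⟩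
    · exact ⟨u0, simplOn_of_clique hu0B hcl⟩
    · exact ⟨y, hy⟩
  obtain ⟨y, hyB, hysimp⟩ := hsimp
  obtain ⟨x, hxB, hyx⟩ := hnb y hyB
  refine ⟨x, hBA hxB, y, hBA hyB, G.ne_of_adj hyx, ?_⟩
  intro z hz hcase
  rcases hcase with rfl | hadjz
  · exact Or.inr hyx.symm
  · have hzB : z ∈ B := hclose y hyB z hz hadjz
    rcases hysimp z hzB x hxB hadjz hyx with h | h
    · exact Or.inl h
    · exact Or.inr h.symm

lemma codismantlableOn_of_chordal [DecidableEq V] {G : SimpleGraph V} (hG : Chordal G) :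
    ∀ (n : ℕ) (A : Finset V), A.card ≤ n → CodismantlableOn G A := by
  intro n
  induction n with
  | zero =>
    intro A hcard
    rw [Nat.le_zero, Finset.card_eq_zero] at hcard
    subst hcard
    rw [CodismantlableOn]
    exact Or.inl (by simp)
  | succ n ih =>
    intro A hcard
    rcases Classical.em (∀ x ∈ A, ∀ y ∈ A, ¬ G.Adj x y) with hel | hel
    · rw [CodismantlableOn]
      exact Or.inl hel
    · push_neg at hel
      obtain ⟨u0, hu0, v0, hv0, hadj⟩ := hel
      obtain ⟨x, hxA, hcodom⟩ := exists_codominatedOn hG hu0 hv0 hadj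
      rw [CodismantlableOn]
      refine Or.inr ⟨x, hxA, hcodom, ih _ ?_⟩
      have := Finset.card_erase_lt_of_mem hxA
      omega

/-- every chordal graph is codismantlable. -/
theorem chordal_codismantlable [Fintype V] [DecidableEq V] (G : SimpleGraph V)
    (h : Chordal G) : Codismantlable G :=
  codismantlableOn_of_chordal h Finset.univ.card Finset.univ le_rfl
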